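/- Let G be a compact (or finite) group, G₁ a normal subgroup, and V a finite-dimensional complex irreducible representation of G whose restriction to G₁ is isotypic, say V|_{G₁} ≅ W ⊗ C^k with W an irreducible G₁-representation. Then the image of G in PGL(V) lies in the image of GL(W) × GL_k(C) under the tensor-product map; consequently there is a central extension G̃ of G (by C*) and representations σ: G̃ → GL(W), τ: G̃ → GL_k(C) such that σ ⊗ τ is equivalent to the pullback of V to G̃, the restriction of σ to the preimage G̃₁ of G₁ is irreducible, and the restriction of τ to G̃₁ is scalar. -/

import Mathlib

open scoped TensorProduct


def eB {k : ℕ} (i : Fin k) : Fin k → ℂ := Pi.single i 1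

noncomputable def projT {W : Type} [AddCommGroup W] [Module ℂ W] {k : ℕ} (i : Fin k) :
    (W ⊗[ℂ] (Fin k → ℂ)) →ₗ[ℂ] W :=
  (TensorProduct.rid ℂ W).toLinearMap ∘ₗ TensorProduct.map LinearMap.id (LinearMap.proj i)

lemma projT_tmul {W : Type} [AddCommGroup W] [Module ℂ W] {k : ℕ} (i : Fin k)
    (w : W) (p : Fin k → ℂ) : projT i (w ⊗ₜ[ℂ] p) = p i • w := by
  simp [projT]

lemma single_sum {k : ℕ} (p : Fin k → ℂ) : ∑ i, p i • eB i = p := by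
  have h : ∀ i, p i • eB i = Pi.single i (p i) := by
    intro i
    rw [eB, ← Pi.single_smul, smul_eq_mul, mul_one]
  simp_rw [h]
  exact Finset.univ_sum_single p

lemma aux_sum {W : Type} [AddCommGroup W] [Module ℂ W] {k : ℕ}
    (x : W ⊗[ℂ] (Fin k → ℂ)) : ∑ i, (projT i x) ⊗ₜ[ℂ] eB i = x := by
  have hL : (∑ i, ((TensorProduct.mk ℂ W (Fin k → ℂ)).flip (eB i)) ∘ₗ projT i)
      = (LinearMap.id : (W ⊗[ℂ] (Fin k → ℂ)) →ₗ[ℂ] _) := by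
    apply TensorProduct.ext'
    intro w p
    simp only [LinearMap.sum_apply, LinearMap.comp_apply, projT_tmul, LinearMap.id_apply,
      TensorProduct.mk_apply, LinearMap.flip_apply]
    calc ∑ i, (p i • w) ⊗ₜ[ℂ] eB i
        = ∑ i, w ⊗ₜ[ℂ] (p i • eB i) := by
          congr 1; ext i; rw [TensorProduct.smul_tmul]
      _ = w ⊗ₜ[ℂ] (∑ i, p i • eB i) := by rw [TensorProduct.tmul_sum]
      _ = w ⊗ₜ[ℂ] p := by rw [single_sum]
  have h2 := congrArg (fun L => L x) hL
  simpa [TensorProduct.mk_apply] using h2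

lemma aux_schur {W : Type} [AddCommGroup W] [Module ℂ W] [FiniteDimensional ℂ W] [Nontrivial W]
    {H : Type} [Group H] (ρW : Representation ℂ H W)
    (hirr : ∀ p : Submodule ℂ W, (∀ n : H, ∀ w ∈ p, ρW n w ∈ p) → p = ⊥ ∨ p = ⊤)
    (f : W →ₗ[ℂ] W) (hf : ∀ (n : H) (w : W), f (ρW n w) = ρW n (f w)) :
    ∃ c : ℂ, ∀ w, f w = c • w := by
  obtain ⟨c, hc⟩ := Module.End.exists_eigenvalue f
  refine ⟨c, ?_⟩
  have hinv : ∀ n : H, ∀ w ∈ Module.End.eigenspace f c, ρW n w ∈ Module.End.eigenspace f c := by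
    intro n w hw
    rw [Module.End.mem_eigenspace_iff] at hw ⊢
    rw [hf, hw, map_smul]
  rcases hirr _ hinv with h | h
  · exact absurd h hc
  · intro w
    have hw : w ∈ Module.End.eigenspace f c := h ▸ Submodule.mem_top
    rwa [Module.End.mem_eigenspace_iff] at hw

lemma aux_dual {W : Type} [AddCommGroup W] [Module ℂ W] {w : W} (hw : w ≠ 0) :
    ∃ φ : W →ₗ[ℂ] ℂ, φ w = 1 := by
  have h := (Module.forall_dual_apply_eq_zero_iff ℂ w).not.mpr hw
  push_neg at h
  obtain ⟨φ, hφ⟩ := h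
  exact ⟨(φ w)⁻¹ • φ, by simp [inv_mul_cancel₀ hφ]⟩

lemma aux_tmul_ne_zero {W P : Type} [AddCommGroup W] [Module ℂ W] [AddCommGroup P] [Module ℂ P]
    {w : W} {p : P} (hw : w ≠ 0) (hp : p ≠ 0) : w ⊗ₜ[ℂ] p ≠ 0 := by
  obtain ⟨φ, hφ⟩ := aux_dual hw
  obtain ⟨ψ, hψ⟩ := aux_dual hp
  intro h
  have h2 : ((TensorProduct.lid ℂ ℂ).toLinearMap ∘ₗ TensorProduct.map φ ψ) (w ⊗ₜ[ℂ] p) = 0 := by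
    rw [h]; simp
  simp [hφ, hψ] at h2

lemma aux_decomp {W : Type} [AddCommGroup W] [Module ℂ W] [FiniteDimensional ℂ W] [Nontrivial W]
    {k : ℕ} {H : Type} [Group H] (ρ1 ρ2 : Representation ℂ H W)
    (h1 : ∀ p : Submodule ℂ W, (∀ n : H, ∀ w ∈ p, ρ1 n w ∈ p) → p = ⊥ ∨ p = ⊤)
    (h2 : ∀ p : Submodule ℂ W, (∀ n : H, ∀ w ∈ p, ρ2 n w ∈ p) → p = ⊥ ∨ p = ⊤)
    [Nontrivial (W ⊗[ℂ] (Fin k → ℂ))]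
    (T : (W ⊗[ℂ] (Fin k → ℂ)) ≃ₗ[ℂ] (W ⊗[ℂ] (Fin k → ℂ)))
    (hT : ∀ (n : H) (x : W ⊗[ℂ] (Fin k → ℂ)),
      T (TensorProduct.map (ρ1 n) LinearMap.id x) = TensorProduct.map (ρ2 n) LinearMap.id (T x)) :
    ∃ (S : Module.End ℂ W) (B : Module.End ℂ (Fin k → ℂ)),
      Function.Bijective S ∧ Function.Bijective B ∧
      (T : (W ⊗[ℂ] (Fin k → ℂ)) →ₗ[ℂ] (W ⊗[ℂ] (Fin k → ℂ))) = TensorProduct.map S B := by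
  classical
  set P := Fin k → ℂ with hP
  let Tb : Fin k → Fin k → (W →ₗ[ℂ] W) := fun i j =>
    projT i ∘ₗ (T : (W ⊗[ℂ] P) →ₗ[ℂ] (W ⊗[ℂ] P)) ∘ₗ (TensorProduct.mk ℂ W P).flip (eB j)
  have hTb_apply : ∀ i j w, Tb i j w = projT i (T (w ⊗ₜ[ℂ] eB j)) := fun i j w => rfl
  have hproj : ∀ (n : H) (i : Fin k) (x : W ⊗[ℂ] P),
      projT i (TensorProduct.map (ρ2 n) LinearMap.id x) = ρ2 n (projT i x) := by
    intro n i x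
    have hc : (projT i ∘ₗ TensorProduct.map (ρ2 n) LinearMap.id)
        = (ρ2 n ∘ₗ projT i : (W ⊗[ℂ] P) →ₗ[ℂ] W) := by
      apply TensorProduct.ext'
      intro w p
      simp [projT_tmul, map_smul]
    simpa using LinearMap.congr_fun hc x
  have hTbequiv : ∀ i j (n : H) (w : W), Tb i j (ρ1 n w) = ρ2 n (Tb i j w) := by
    intro i j n w
    have h1' : (ρ1 n w) ⊗ₜ[ℂ] eB j
        = TensorProduct.map (ρ1 n) LinearMap.id (w ⊗ₜ[ℂ] eB j) := by simp
    rw [hTb_apply, h1', hT, hproj, ← hTb_apply]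
  -- a nonzero block exists
  have hex : ∃ i j, Tb i j ≠ 0 := by
    by_contra hall
    push_neg at hall
    have hT0 : ∀ x : W ⊗[ℂ] P, T x = 0 := by
      intro x
      have hx := aux_sum x
      calc T x = T (∑ j, (projT j x) ⊗ₜ[ℂ] eB j) := by rw [hx]
        _ = ∑ j, T ((projT j x) ⊗ₜ[ℂ] eB j) := map_sum _ _ _
        _ = 0 := by
            refine Finset.sum_eq_zero fun j _ => ?_
            have := aux_sum (T ((projT j x) ⊗ₜ[ℂ] eB j))
            rw [← this]
            refine Finset.sum_eq_zero fun i _ => ?_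
            have hz : projT i (T ((projT j x) ⊗ₜ[ℂ] eB j)) = 0 := by
              rw [← hTb_apply, hall i j]; rfl
            rw [hz, TensorProduct.zero_tmul]
    obtain ⟨x, y, hxy⟩ := exists_pair_ne (W ⊗[ℂ] P)
    exact hxy (T.injective (by rw [hT0 x, hT0 y]))
  obtain ⟨i0, j0, hS0ne⟩ := hex
  set S0 := Tb i0 j0 with hS0def
  have hkerinv : ∀ n : H, ∀ w ∈ LinearMap.ker S0, ρ1 n w ∈ LinearMap.ker S0 := by
    intro n w hw
    rw [LinearMap.mem_ker] at hw ⊢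
    rw [hS0def, hTbequiv, ← hS0def, hw, map_zero]
  have hSinj : Function.Injective S0 := by
    rcases h1 _ hkerinv with h | h
    · exact LinearMap.ker_eq_bot.mp h
    · exact absurd (LinearMap.ker_eq_top.mp h) hS0ne
  have hrangeinv : ∀ n : H, ∀ w ∈ LinearMap.range S0, ρ2 n w ∈ LinearMap.range S0 := by
    rintro n w ⟨u, rfl⟩
    exact ⟨ρ1 n u, (hTbequiv i0 j0 n u).symm ▸ rfl⟩
  have hSsurj : Function.Surjective S0 := by
    rcases h2 _ hrangeinv with h | h
    · exact absurd (LinearMap.range_eq_bot.mp h) hS0ne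
    · exact LinearMap.range_eq_top.mp h
  let Se : W ≃ₗ[ℂ] W := LinearEquiv.ofBijective S0 ⟨hSinj, hSsurj⟩
  have hSe_app : ∀ w, Se w = S0 w := fun w => rfl
  have hSe_symm : ∀ (n : H) (w : W), Se.symm (ρ2 n w) = ρ1 n (Se.symm w) := by
    intro n w
    apply Se.injective
    rw [Se.apply_symm_apply, hSe_app, hTbequiv, ← hSe_app, Se.apply_symm_apply]
  have hb : ∀ i j, ∃ c : ℂ, ∀ w, Tb i j w = c • S0 w := by
    intro i j
    obtain ⟨c, hc⟩ := aux_schur ρ1 h1 (Se.symm.toLinearMap ∘ₗ Tb i j) (fun n w => by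
      simp only [LinearMap.comp_apply, LinearEquiv.coe_coe]
      rw [hTbequiv, hSe_symm])
    refine ⟨c, fun w => ?_⟩
    have hcw := hc w
    simp only [LinearMap.comp_apply, LinearEquiv.coe_coe] at hcw
    calc Tb i j w = Se (Se.symm (Tb i j w)) := (Se.apply_symm_apply _).symm
      _ = Se (c • w) := by rw [hcw]
      _ = c • S0 w := by rw [map_smul, hSe_app]
  choose b hbspec using hb
  let B : Module.End ℂ P := Matrix.toLin' (Matrix.of b)
  have hBe : ∀ j, B (eB j) = ∑ i, b i j • eB i := by
    intro j
    funext i'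
    simp only [B, Matrix.toLin'_apply, eB, Matrix.mulVec_single, Finset.sum_apply,
      Pi.smul_apply, Pi.single_apply, smul_eq_mul, mul_ite, mul_one, mul_zero]
    rw [Finset.sum_ite_eq Finset.univ i' (fun i => b i j)]
    rw [Matrix.toLin'_apply, Matrix.mulVec_single]
    simp
  have hTgen : ∀ w j, T (w ⊗ₜ[ℂ] eB j) = S0 w ⊗ₜ[ℂ] B (eB j) := by
    intro w j
    have hx := aux_sum (T (w ⊗ₜ[ℂ] eB j))
    rw [← hx]
    calc ∑ i, (projT i (T (w ⊗ₜ[ℂ] eB j))) ⊗ₜ[ℂ] eB i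
        = ∑ i, (b i j • S0 w) ⊗ₜ[ℂ] eB i := by
          refine Finset.sum_congr rfl fun i _ => ?_
          rw [← hTb_apply, hbspec]
      _ = ∑ i, S0 w ⊗ₜ[ℂ] (b i j • eB i) := by
          refine Finset.sum_congr rfl fun i _ => ?_
          rw [TensorProduct.smul_tmul]
      _ = S0 w ⊗ₜ[ℂ] (∑ i, b i j • eB i) := by rw [TensorProduct.tmul_sum]
      _ = S0 w ⊗ₜ[ℂ] B (eB j) := by rw [hBe]
  have hmain : (T : (W ⊗[ℂ] P) →ₗ[ℂ] (W ⊗[ℂ] P)) = TensorProduct.map S0 B := by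
    apply TensorProduct.ext'
    intro w p
    have heq : ((T : (W ⊗[ℂ] P) →ₗ[ℂ] (W ⊗[ℂ] P)) ∘ₗ (TensorProduct.mk ℂ W P w))
        = ((TensorProduct.mk ℂ W P (S0 w)) ∘ₗ B) := by
      apply Module.Basis.ext (Pi.basisFun ℂ (Fin k))
      intro j
      simp only [LinearMap.comp_apply, TensorProduct.mk_apply, Pi.basisFun_apply,
        LinearEquiv.coe_coe]
      exact hTgen w j
    have := LinearMap.congr_fun heq p
    simpa using this
  have hcomp : TensorProduct.map (LinearMap.id : W →ₗ[ℂ] W) B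
      = (TensorProduct.congr Se.symm (LinearEquiv.refl ℂ P)).toLinearMap
          ∘ₗ (T : (W ⊗[ℂ] P) →ₗ[ℂ] (W ⊗[ℂ] P)) := by
    rw [hmain]
    have hcongr : (TensorProduct.congr Se.symm (LinearEquiv.refl ℂ P)).toLinearMap
        = TensorProduct.map Se.symm.toLinearMap LinearMap.id := rfl
    rw [hcongr, ← TensorProduct.map_comp]
    congr 1
    ext w
    simp only [LinearMap.comp_apply, LinearEquiv.coe_coe, LinearMap.id_apply]
    rw [← hSe_app, Se.symm_apply_apply]
  have hmapidB : Function.Bijective (TensorProduct.map (LinearMap.id : W →ₗ[ℂ] W) B) := by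
    rw [hcomp, LinearMap.coe_comp]
    exact Function.Bijective.comp (LinearEquiv.bijective _) (LinearEquiv.bijective T)
  have hBinj : Function.Injective B := by
    intro p q hpq
    by_contra hne
    obtain ⟨w₀, hw₀⟩ := exists_ne (0 : W)
    have hd : B (p - q) = 0 := by rw [map_sub, hpq, sub_self]
    have hz : TensorProduct.map (LinearMap.id : W →ₗ[ℂ] W) B (w₀ ⊗ₜ[ℂ] (p - q)) = 0 := by
      rw [TensorProduct.map_tmul, hd, TensorProduct.tmul_zero]
    have := hmapidB.injective (hz.trans (map_zero _).symm)
    exact aux_tmul_ne_zero hw₀ (sub_ne_zero.mpr hne) this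
  have hBsurj : Function.Surjective B := LinearMap.injective_iff_surjective.mp hBinj
  exact ⟨S0, B, ⟨hSinj, hSsurj⟩, ⟨hBinj, hBsurj⟩, hmain⟩

lemma aux_scalar {W P : Type} [AddCommGroup W] [Module ℂ W] [AddCommGroup P] [Module ℂ P]
    [Nontrivial W]
    (A A₀ : Module.End ℂ W) (B : Module.End ℂ P)
    (hAinj : Function.Injective A) (hA₀ : A₀ ≠ 0) {p₀ : P} (hp₀ : p₀ ≠ 0)
    (h : ∀ (w : W) (p : P), A w ⊗ₜ[ℂ] B p = A₀ w ⊗ₜ[ℂ] p) :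
    ∃ c : ℂ, c ≠ 0 ∧ B = c • (1 : Module.End ℂ P) ∧ c • A = A₀ := by
  obtain ⟨w₀, hw₀⟩ := exists_ne (0 : W)
  have hAw₀ : A w₀ ≠ 0 := fun hz => hw₀ (hAinj (by simpa using hz))
  obtain ⟨φ, hφ⟩ := aux_dual hAw₀
  set c : ℂ := φ (A₀ w₀) with hc
  have hB : ∀ p, B p = c • p := by
    intro p
    have h2 := congrArg ((TensorProduct.lid ℂ P).toLinearMap ∘ₗ TensorProduct.map φ LinearMap.id)
      (h w₀ p)
    simpa [hφ] using h2
  have hA : ∀ w, c • A w = A₀ w := by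
    intro w
    have h2 := h w p₀
    rw [hB] at h2
    have h3 : (c • A w) ⊗ₜ[ℂ] p₀ = A₀ w ⊗ₜ[ℂ] p₀ := by
      rw [← h2, TensorProduct.tmul_smul, TensorProduct.smul_tmul']
    by_contra hne
    have h4 : (c • A w - A₀ w) ⊗ₜ[ℂ] p₀ = 0 := by
      rw [TensorProduct.sub_tmul, h3, sub_self]
    exact aux_tmul_ne_zero (sub_ne_zero.mpr hne) hp₀ h4
  have hcne : c ≠ 0 := by
    intro h0
    apply hA₀
    ext w
    rw [← hA w, h0, zero_smul, LinearMap.zero_apply]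
  refine ⟨c, hcne, ?_, ?_⟩
  · ext p; simpa using hB p
  · ext w; exact hA w

lemma unit_inj {M : Type} [AddCommGroup M] [Module ℂ M] (u : (Module.End ℂ M)ˣ) :
    Function.Injective (u.val) := by
  intro a b h
  have h2 : ((u⁻¹ : (Module.End ℂ M)ˣ) : Module.End ℂ M) (u.val a)
      = ((u⁻¹ : (Module.End ℂ M)ˣ) : Module.End ℂ M) (u.val b) := by rw [h]
  rw [← Module.End.mul_apply, ← Module.End.mul_apply, ← Units.val_mul, inv_mul_cancel,
    Units.val_one, Module.End.one_apply, Module.End.one_apply] at h2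
  exact h2

lemma end_one_ne_zero {M : Type} [AddCommGroup M] [Module ℂ M] [Nontrivial M] :
    (1 : Module.End ℂ M) ≠ 0 := by
  intro h
  obtain ⟨w₀, hw₀⟩ := exists_ne (0 : M)
  exact hw₀ (by simpa using LinearMap.congr_fun h w₀)


/-- If `V` is an irreducible complex representation of a finite group `G` whose
restriction to a normal subgroup `N` is isotypic, `V|_N ≅ W ⊗ ℂ^k` with `W`
an irreducible `N`-representation, then there is a central extension `G̃` of `G`
by `ℂ*` and representations `σ : G̃ → GL(W)`, `τ : G̃ → GL_k(ℂ)` such that the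
restriction of `σ` to the preimage of `N` is irreducible, the restriction of `τ`
to the preimage of `N` is scalar, and `σ ⊗ τ` is equivalent to the pullback of `V`. -/
theorem stmt_14 (G : Type) [Group G] [Finite G] (N : Subgroup G) [N.Normal]
    (V W : Type) [AddCommGroup V] [Module ℂ V] [FiniteDimensional ℂ V] [Nontrivial V]
    [AddCommGroup W] [Module ℂ W] [FiniteDimensional ℂ W] [Nontrivial W] (k : ℕ)
    (ρ : Representation ℂ G V) (ρW : Representation ℂ N W)
    (hρirr : ∀ p : Submodule ℂ V, (∀ g : G, ∀ v ∈ p, ρ g v ∈ p) → p = ⊥ ∨ p = ⊤)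
    (hWirr : ∀ p : Submodule ℂ W, (∀ n : N, ∀ w ∈ p, ρW n w ∈ p) → p = ⊥ ∨ p = ⊤)
    (e : V ≃ₗ[ℂ] W ⊗[ℂ] (Fin k → ℂ))
    (he : ∀ (n : N) (v : V),
      e (ρ (n : G) v) = TensorProduct.map (ρW n) LinearMap.id (e v)) :
    ∃ (Gt : GrpCat) (π : Gt →* G) (σ : Representation ℂ Gt W)
      (τ : Representation ℂ Gt (Fin k → ℂ)),
      Function.Surjective π ∧
      π.ker ≤ Subgroup.center Gt ∧
      Nonempty (π.ker ≃* ℂˣ) ∧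
      (∀ p : Submodule ℂ W,
        (∀ gt : Gt, π gt ∈ N → ∀ w ∈ p, σ gt w ∈ p) → p = ⊥ ∨ p = ⊤) ∧
      (∀ gt : Gt, π gt ∈ N → ∃ c : ℂ, τ gt = c • (1 : Module.End ℂ (Fin k → ℂ))) ∧
      ∃ eq : (W ⊗[ℂ] (Fin k → ℂ)) ≃ₗ[ℂ] V,
        ∀ (gt : Gt) (v : W ⊗[ℂ] (Fin k → ℂ)),
          eq ((σ.tprod τ) gt v) = ρ (π gt) (eq v) := by
  classical
  have hVnt : Nontrivial (W ⊗[ℂ] (Fin k → ℂ)) := e.symm.toEquiv.nontrivial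
  have hk : k ≠ 0 := by
    intro h0
    subst h0
    obtain ⟨x, y, hxy⟩ := exists_pair_ne (W ⊗[ℂ] (Fin 0 → ℂ))
    apply hxy
    rw [← aux_sum x, ← aux_sum y]
    simp
  have hk0 : 0 < k := Nat.pos_of_ne_zero hk
  set i₀ : Fin k := ⟨0, hk0⟩ with hi₀
  have hp₀ : eB i₀ ≠ (0 : Fin k → ℂ) := by
    intro h
    have h2 := congrFun h i₀
    simp [eB] at h2
  -- the subgroup
  let Gs : Subgroup (G × (Module.End ℂ W)ˣ × (Module.End ℂ (Fin k → ℂ))ˣ) :=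
    { carrier := {x | ∀ v : V, e (ρ x.1 v)
        = TensorProduct.map (x.2.1 : Module.End ℂ W)
            (x.2.2 : Module.End ℂ (Fin k → ℂ)) (e v)}
      one_mem' := by
        intro v
        show e (ρ (1 : G) v) = TensorProduct.map ((1 : (Module.End ℂ W)ˣ) : Module.End ℂ W)
          ((1 : (Module.End ℂ (Fin k → ℂ))ˣ) : Module.End ℂ (Fin k → ℂ)) (e v)
        rw [map_one, Units.val_one, Units.val_one, TensorProduct.map_one,
          Module.End.one_apply, Module.End.one_apply]
      mul_mem' := by
        intro x y hx hy v
        show e (ρ (x.1 * y.1) v) = TensorProduct.map ((x.2.1 * y.2.1 : (Module.End ℂ W)ˣ) :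
          Module.End ℂ W) ((x.2.2 * y.2.2 : (Module.End ℂ (Fin k → ℂ))ˣ) :
          Module.End ℂ (Fin k → ℂ)) (e v)
        rw [map_mul, Module.End.mul_apply, hx (ρ y.1 v), hy v,
          Units.val_mul, Units.val_mul, TensorProduct.map_mul, Module.End.mul_apply]
      inv_mem' := by
        intro x hx v
        show e (ρ (x.1⁻¹) v) = TensorProduct.map ((x.2.1⁻¹ : (Module.End ℂ W)ˣ) :
          Module.End ℂ W) ((x.2.2⁻¹ : (Module.End ℂ (Fin k → ℂ))ˣ) :
          Module.End ℂ (Fin k → ℂ)) (e v)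
        have h0 : ρ x.1 (ρ x.1⁻¹ v) = v := by
          rw [← Module.End.mul_apply, ← map_mul, mul_inv_cancel, map_one, Module.End.one_apply]
        have h1 := hx (ρ x.1⁻¹ v)
        rw [h0] at h1
        rw [h1, ← Module.End.mul_apply, ← TensorProduct.map_mul, ← Units.val_mul,
          ← Units.val_mul, inv_mul_cancel, inv_mul_cancel, Units.val_one, Units.val_one,
          TensorProduct.map_one, Module.End.one_apply] }
  let π0 : ↥Gs →* G := (MonoidHom.fst G _).comp Gs.subtype
  let σ0 : ↥Gs →* Module.End ℂ W := (Units.coeHom (Module.End ℂ W)).comp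
    ((MonoidHom.fst _ _).comp ((MonoidHom.snd G _).comp Gs.subtype))
  let τ0 : ↥Gs →* Module.End ℂ (Fin k → ℂ) := (Units.coeHom (Module.End ℂ (Fin k → ℂ))).comp
    ((MonoidHom.snd _ _).comp ((MonoidHom.snd G _).comp Gs.subtype))
  have hmem : ∀ (x : ↥Gs) (v : V), e (ρ (π0 x) v)
      = TensorProduct.map (σ0 x) (τ0 x) (e v) := fun x v => x.2 v
  have hmemN : ∀ n : N, ((n : G), Representation.asGroupHom ρW n,
      (1 : (Module.End ℂ (Fin k → ℂ))ˣ)) ∈ Gs := by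
    intro n v
    show e (ρ (n : G) v) = TensorProduct.map
      ((Representation.asGroupHom ρW n : (Module.End ℂ W)ˣ) : Module.End ℂ W)
      ((1 : (Module.End ℂ (Fin k → ℂ))ˣ) : Module.End ℂ (Fin k → ℂ)) (e v)
    rw [he n v, Representation.asGroupHom_apply, Units.val_one]
    rfl
  -- surjectivity
  have hsurj0 : Function.Surjective π0 := by
    intro g
    let cg : N →* N :=
      { toFun := fun n => ⟨g * n * g⁻¹, Subgroup.Normal.conj_mem ‹N.Normal› n.1 n.2 g⟩
        map_one' := by ext; simp
        map_mul' := by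
          intro a b
          ext
          show g * (↑a * ↑b) * g⁻¹ = (g * ↑a * g⁻¹) * (g * ↑b * g⁻¹)
          group }
    let ρ2 : Representation ℂ N W := ρW.comp cg
    have h2irr : ∀ p : Submodule ℂ W, (∀ n : N, ∀ w ∈ p, (ρ2 n) w ∈ p) → p = ⊥ ∨ p = ⊤ := by
      intro p hp
      apply hWirr
      intro n w hw
      have hmN : g⁻¹ * ↑n * g ∈ N := by
        have h3 := Subgroup.Normal.conj_mem ‹N.Normal› (↑n) n.2 g⁻¹
        rwa [inv_inv] at h3
      set m : N := ⟨g⁻¹ * ↑n * g, hmN⟩ with hm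
      have hcgm : cg m = n := by
        apply Subtype.ext
        show g * (g⁻¹ * ↑n * g) * g⁻¹ = ↑n
        group
      have h4 := hp m w hw
      have h5 : ρ2 m = ρW n := by
        show ρW (cg m) = ρW n
        rw [hcgm]
      rwa [h5] at h4
    let eg : V ≃ₗ[ℂ] V := LinearEquiv.ofLinear (ρ g) (ρ g⁻¹)
      (LinearMap.ext fun v => by
        rw [LinearMap.comp_apply, LinearMap.id_apply, ← Module.End.mul_apply, ← map_mul,
          mul_inv_cancel, map_one, Module.End.one_apply])
      (LinearMap.ext fun v => by
        rw [LinearMap.comp_apply, LinearMap.id_apply, ← Module.End.mul_apply, ← map_mul,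
          inv_mul_cancel, map_one, Module.End.one_apply])
    let T : (W ⊗[ℂ] (Fin k → ℂ)) ≃ₗ[ℂ] (W ⊗[ℂ] (Fin k → ℂ)) := e.symm ≪≫ₗ (eg ≪≫ₗ e)
    have hT : ∀ (n : N) (x : W ⊗[ℂ] (Fin k → ℂ)),
        T (TensorProduct.map (ρW n) LinearMap.id x)
          = TensorProduct.map (ρ2 n) LinearMap.id (T x) := by
      intro n x
      have h1 := he n (e.symm x)
      rw [e.apply_symm_apply] at h1
      have hs : e.symm (TensorProduct.map (ρW n) LinearMap.id x) = ρ ↑n (e.symm x) := by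
        rw [← h1, e.symm_apply_apply]
      show e (eg (e.symm (TensorProduct.map (ρW n) LinearMap.id x)))
          = TensorProduct.map (ρ2 n) LinearMap.id (e (eg (e.symm x)))
      rw [hs]
      have hmul : ρ g (ρ ↑n (e.symm x)) = ρ ↑(cg n) (ρ g (e.symm x)) := by
        rw [← Module.End.mul_apply, ← Module.End.mul_apply, ← map_mul, ← map_mul]
        have h6 : g * ↑n = ↑(cg n) * g := by
          show g * ↑n = (g * ↑n * g⁻¹) * g
          group
        rw [h6]
      show e (ρ g (ρ ↑n (e.symm x))) = TensorProduct.map (ρ2 n) LinearMap.id (e (ρ g (e.symm x)))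
      rw [hmul, he (cg n) (ρ g (e.symm x))]
      rfl
    obtain ⟨S, B, hSbij, hBbij, hTmap⟩ := aux_decomp ρW ρ2 hWirr h2irr T hT
    let Seq := LinearEquiv.ofBijective S hSbij
    let Beq := LinearEquiv.ofBijective B hBbij
    let Su : (Module.End ℂ W)ˣ := ⟨S, Seq.symm,
      LinearMap.ext fun w => Seq.apply_symm_apply w,
      LinearMap.ext fun w => Seq.symm_apply_apply w⟩
    let Bu : (Module.End ℂ (Fin k → ℂ))ˣ := ⟨B, Beq.symm,
      LinearMap.ext fun p => Beq.apply_symm_apply p,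
      LinearMap.ext fun p => Beq.symm_apply_apply p⟩
    have hmemg : ((g, Su, Bu) : G × (Module.End ℂ W)ˣ × (Module.End ℂ (Fin k → ℂ))ˣ) ∈ Gs := by
      intro v
      have h1 := LinearMap.congr_fun hTmap (e v)
      simp only [LinearEquiv.coe_coe] at h1
      have h2 : T (e v) = e (ρ g v) := by
        show e (eg (e.symm (e v))) = e (ρ g v)
        rw [e.symm_apply_apply]
        rfl
      show e (ρ g v) = TensorProduct.map S B (e v)
      rw [← h2, h1]
    exact ⟨⟨(g, Su, Bu), hmemg⟩, rfl⟩
  -- scalar structure of the kernel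
  have hkerscalar : ∀ x : ↥Gs, π0 x = 1 → ∃ c : ℂˣ,
      (σ0 x) = (c : ℂ) • (1 : Module.End ℂ W) ∧
      (τ0 x) = ((c⁻¹ : ℂˣ) : ℂ) • (1 : Module.End ℂ (Fin k → ℂ)) := by
    intro x hx
    have hpure : ∀ (w : W) (p : Fin k → ℂ),
        (σ0 x) w ⊗ₜ[ℂ] (τ0 x) p = (1 : Module.End ℂ W) w ⊗ₜ[ℂ] p := by
      intro w p
      have h := hmem x (e.symm (w ⊗ₜ[ℂ] p))
      rw [hx, map_one, Module.End.one_apply, e.apply_symm_apply] at h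
      have h2 := h.symm
      rw [TensorProduct.map_tmul] at h2
      simpa using h2
    obtain ⟨c, hc, hB, hA⟩ := aux_scalar (σ0 x) (1 : Module.End ℂ W) (τ0 x)
      (unit_inj x.1.2.1) end_one_ne_zero hp₀ hpure
    refine ⟨(Units.mk0 c hc)⁻¹, ?_, ?_⟩
    · have h7 : σ0 x = c⁻¹ • (1 : Module.End ℂ W) := by
        rw [← hA, smul_smul, inv_mul_cancel₀ hc, one_smul]
      simpa using h7
    · simpa using hB
  have hcenter0 : ∀ x : ↥Gs, π0 x = 1 → ∀ y : ↥Gs, y * x = x * y := by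
    intro x hx y
    obtain ⟨c, hσx, hτx⟩ := hkerscalar x hx
    have hx1 : (x : G × (Module.End ℂ W)ˣ × (Module.End ℂ (Fin k → ℂ))ˣ).1 = 1 := hx
    refine Subtype.ext (Prod.ext ?_ (Prod.ext ?_ ?_))
    · show y.1.1 * x.1.1 = x.1.1 * y.1.1
      rw [hx1, mul_one, one_mul]
    · apply Units.ext
      show (σ0 y) * (σ0 x) = (σ0 x) * (σ0 y)
      rw [hσx, mul_smul_comm, smul_mul_assoc, mul_one, one_mul]
    · apply Units.ext
      show (τ0 y) * (τ0 x) = (τ0 x) * (τ0 y)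
      rw [hτx, mul_smul_comm, smul_mul_assoc, mul_one, one_mul]
  -- the scalar embedding
  let su : ℂˣ →* (Module.End ℂ W)ˣ := Units.map (algebraMap ℂ (Module.End ℂ W)).toMonoidHom
  let tu : ℂˣ →* (Module.End ℂ (Fin k → ℂ))ˣ :=
    Units.map (algebraMap ℂ (Module.End ℂ (Fin k → ℂ))).toMonoidHom
  have hsu : ∀ c : ℂˣ, ((su c : (Module.End ℂ W)ˣ) : Module.End ℂ W)
      = (c : ℂ) • (1 : Module.End ℂ W) := by
    intro c
    show algebraMap ℂ (Module.End ℂ W) (c : ℂ) = (c : ℂ) • (1 : Module.End ℂ W)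
    rw [Algebra.algebraMap_eq_smul_one]
  have htu : ∀ c : ℂˣ, ((tu c : (Module.End ℂ (Fin k → ℂ))ˣ) : Module.End ℂ (Fin k → ℂ))
      = (c : ℂ) • (1 : Module.End ℂ (Fin k → ℂ)) := by
    intro c
    show algebraMap ℂ (Module.End ℂ (Fin k → ℂ)) (c : ℂ)
      = (c : ℂ) • (1 : Module.End ℂ (Fin k → ℂ))
    rw [Algebra.algebraMap_eq_smul_one]
  let f0 : ℂˣ →* G × (Module.End ℂ W)ˣ × (Module.End ℂ (Fin k → ℂ))ˣ :=
    MonoidHom.prod 1 (MonoidHom.prod su (tu.comp invMonoidHom))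
  have hf0mem : ∀ c : ℂˣ, f0 c ∈ Gs := by
    intro c v
    show e (ρ (1 : G) v) = TensorProduct.map ((su c : (Module.End ℂ W)ˣ) : Module.End ℂ W)
      ((tu c⁻¹ : (Module.End ℂ (Fin k → ℂ))ˣ) : Module.End ℂ (Fin k → ℂ)) (e v)
    rw [map_one, Module.End.one_apply, hsu, htu, TensorProduct.map_smul_left,
      TensorProduct.map_smul_right, TensorProduct.map_one, smul_smul, Units.mul_inv,
      one_smul, Module.End.one_apply]
  let f1 : ℂˣ →* ↥Gs := MonoidHom.codRestrict f0 Gs hf0mem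
  have hf1ker : ∀ c : ℂˣ, π0 (f1 c) = 1 := fun c => rfl
  have hf1inj : Function.Injective f1 := by
    intro c d h
    have h1 : su c = su d := congrArg (fun z : ↥Gs => z.1.2.1) h
    have h2 : ((su c : (Module.End ℂ W)ˣ) : Module.End ℂ W)
        = ((su d : (Module.End ℂ W)ˣ) : Module.End ℂ W) := by rw [h1]
    rw [hsu, hsu] at h2
    obtain ⟨w₀, hw₀⟩ := exists_ne (0 : W)
    have h3 : (c : ℂ) • w₀ = (d : ℂ) • w₀ := by
      have h4 := LinearMap.congr_fun h2 w₀
      simpa using h4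
    exact Units.ext (smul_left_injective ℂ hw₀ h3)
  have hf1surj : ∀ x : ↥Gs, π0 x = 1 → ∃ c : ℂˣ, f1 c = x := by
    intro x hx
    obtain ⟨c, hσx, hτx⟩ := hkerscalar x hx
    refine ⟨c, ?_⟩
    apply Subtype.ext
    refine Prod.ext ?_ (Prod.ext ?_ ?_)
    · show (1 : G) = x.1.1
      exact hx.symm
    · apply Units.ext
      show ((su c : (Module.End ℂ W)ˣ) : Module.End ℂ W) = σ0 x
      rw [hsu, hσx]
    · apply Units.ext
      show ((tu c⁻¹ : (Module.End ℂ (Fin k → ℂ))ˣ) : Module.End ℂ (Fin k → ℂ)) = τ0 x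
      rw [htu, hτx]
  -- now lift everything
  let Gt : GrpCat := GrpCat.of (ULift ↥Gs)
  let d : ULift ↥Gs ≃* ↥Gs := MulEquiv.ulift
  let π : Gt →* G := π0.comp d.toMonoidHom
  let σ : Representation ℂ Gt W := σ0.comp d.toMonoidHom
  let τ : Representation ℂ Gt (Fin k → ℂ) := τ0.comp d.toMonoidHom
  refine ⟨Gt, π, σ, τ, ?_, ?_, ?_, ?_, ?_, ⟨e.symm, ?_⟩⟩
  · exact hsurj0.comp d.surjective
  · intro x hx
    rw [Subgroup.mem_center_iff]
    intro y
    apply d.injective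
    rw [map_mul, map_mul]
    exact hcenter0 (d x) hx (d y)
  · -- kernel iso
    have hker : ∀ c : ℂˣ, (d.symm.toMonoidHom.comp f1) c ∈ π.ker := by
      intro c
      show π0 (d (d.symm (f1 c))) = 1
      rw [MulEquiv.apply_symm_apply]
      exact hf1ker c
    let f2 : ℂˣ →* π.ker := MonoidHom.codRestrict (d.symm.toMonoidHom.comp f1) π.ker hker
    have hinj : Function.Injective f2 := by
      intro c c' h
      have h1 : d.symm (f1 c) = d.symm (f1 c') := congrArg (fun z : π.ker => (z : Gt)) h
      exact hf1inj (d.symm.injective h1)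
    have hsurj : Function.Surjective f2 := by
      rintro ⟨x, hx⟩
      have hx' : π0 (d x) = 1 := hx
      obtain ⟨c, hc⟩ := hf1surj (d x) hx'
      refine ⟨c, ?_⟩
      apply Subtype.ext
      show d.symm (f1 c) = x
      rw [hc, MulEquiv.symm_apply_apply]
    exact ⟨(MulEquiv.ofBijective f2 ⟨hinj, hsurj⟩).symm⟩
  · intro p hp
    apply hWirr
    intro n w hw
    have h1 := hp (ULift.up ⟨((n : G), Representation.asGroupHom ρW n, 1), hmemN n⟩) n.2 w hw
    have h2 : σ (ULift.up ⟨((n : G), Representation.asGroupHom ρW n, 1), hmemN n⟩) = ρW n :=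
      Representation.asGroupHom_apply ρW n
    rwa [h2] at h1
  · intro x hxN
    set n : N := ⟨π x, hxN⟩ with hn
    have hpure : ∀ (w : W) (p : Fin k → ℂ),
        (σ x) w ⊗ₜ[ℂ] (τ x) p = (ρW n) w ⊗ₜ[ℂ] p := by
      intro w p
      have h1 := hmem (d x) (e.symm (w ⊗ₜ[ℂ] p))
      have h2 := he n (e.symm (w ⊗ₜ[ℂ] p))
      rw [e.apply_symm_apply] at h1 h2
      have h3 := h1.symm.trans h2
      rw [TensorProduct.map_tmul, TensorProduct.map_tmul] at h3
      simp only [Module.End.one_apply, LinearMap.id_apply] at h3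
      exact h3
    have hρWn : ρW n ≠ 0 := by
      intro h0
      obtain ⟨w₀, hw₀⟩ := exists_ne (0 : W)
      apply hw₀
      have h5 : ρW n⁻¹ (ρW n w₀) = w₀ := by
        rw [← Module.End.mul_apply, ← map_mul, inv_mul_cancel, map_one, Module.End.one_apply]
      rw [h0] at h5
      simpa using h5.symm
    obtain ⟨c, hc, hB, hA⟩ := aux_scalar (σ x) (ρW n) (τ x)
      (unit_inj (d x).1.2.1) hρWn hp₀ hpure
    exact ⟨c, hB⟩
  · intro x v
    have h1 := hmem (d x) (e.symm v)
    rw [e.apply_symm_apply] at h1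
    show e.symm (TensorProduct.map (σ0 (d x)) (τ0 (d x)) v) = ρ (π0 (d x)) (e.symm v)
    rw [← h1, e.symm_apply_apply]
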